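/- Let G be the structure group of a finite solution (X,r) with its canonical left brace structure, and let n = [G : soc(G)] < ∞. Then I = {n·g : g ∈ G} (n-fold additive multiples) is an ideal of the left brace G: it is a normal subgroup of (G,·), an additive subgroup, invariant under all L_h for h ∈ G, and I ⊆ soc(G). -/

import Mathlib

/-- A left brace: an abelian group `(B,+)` and a group `(B,·)` with the
compatibility law `a·(b+c) + a = a·b + a·c`. -/
class LeftBrace (B : Type*) extends AddCommGroup B, Group B where
  left_compat : ∀ a b c : B, a * (b + c) + a = a * b + a * c

variable {B : Type*} [LeftBrace B]

/-- The star operation `a * b = a·b - a - b` of a left brace. -/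
def bstar (a b : B) : B := a * b - a - b

/-- The map `L_a : b ↦ a·b - a`. -/
def lmap (a b : B) : B := a * b - a

/-- The socle of a left brace. -/
def socle (B : Type*) [LeftBrace B] : Set B := {a : B | ∀ b : B, a * b = a + b}

/-- Iterated star products: `eStar a b m = a*(a*(⋯*(a*b)))` with `a` occurring `m` times. -/

lemma lb_one_eq_zero : (1 : B) = 0 := by
  have h := LeftBrace.left_compat (1 : B) 0 0
  simpa using h

lemma lb_mul_add (a b c : B) : a * (b + c) = a * b + a * c - a := by
  rw [← LeftBrace.left_compat a b c]; abel

lemma lmap_add (a b c : B) : lmap a (b + c) = lmap a b + lmap a c := by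
  unfold lmap; rw [lb_mul_add]; abel

lemma lmap_sub (a b c : B) : lmap a (b - c) = lmap a b - lmap a c := by
  have h := lmap_add a (b - c) c
  rw [sub_add_cancel] at h
  rw [h]; abel

lemma mul_eq_add_lmap (a b : B) : a * b = a + lmap a b := by unfold lmap; abel

lemma lmap_one (a : B) : lmap a 1 = 0 := by unfold lmap; rw [mul_one]; abel

lemma lmap_id (b : B) : lmap (1 : B) b = b := by
  unfold lmap; rw [one_mul, lb_one_eq_zero, sub_zero]

lemma lmap_mul (a b c : B) : lmap (a * b) c = lmap a (lmap b c) := by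
  have : lmap b c = b * c - b := rfl
  rw [this, lmap_sub]
  unfold lmap
  rw [mul_assoc]; abel

/-- The map `lmap a` as an additive monoid hom. -/
def lhom (a : B) : B →+ B where
  toFun := lmap a
  map_zero' := by have := lmap_one a; rwa [lb_one_eq_zero] at this
  map_add' := lmap_add a

lemma socle_iff (a : B) : a ∈ socle B ↔ ∀ b : B, lmap a b = b := by
  constructor
  · intro h b; unfold lmap; rw [h b]; abel
  · intro h b; rw [mul_eq_add_lmap, h b]

lemma socle_mul {a b : B} (ha : a ∈ socle B) (hb : b ∈ socle B) : a * b ∈ socle B := by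
  rw [socle_iff] at *
  intro c; rw [lmap_mul, hb, ha]

lemma socle_inv {a : B} (ha : a ∈ socle B) : a⁻¹ ∈ socle B := by
  rw [socle_iff] at *
  intro c
  have := ha (lmap a⁻¹ c)
  rw [← lmap_mul, mul_inv_cancel, lmap_id] at this
  exact this.symm

lemma socle_zero : (0 : B) ∈ socle B := by
  rw [socle_iff, ← lb_one_eq_zero]; exact lmap_id

lemma socle_neg {a : B} (ha : a ∈ socle B) : -a ∈ socle B := by
  have h : a⁻¹ = -a := by
    have h1 : a⁻¹ * a = a⁻¹ + a := socle_inv ha a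
    have h2 : a⁻¹ * a = 1 := inv_mul_cancel a
    rw [h1, lb_one_eq_zero] at h2
    exact eq_neg_of_add_eq_zero_left h2
  rw [← h]; exact socle_inv ha

lemma socle_add {a b : B} (ha : a ∈ socle B) (hb : b ∈ socle B) : a + b ∈ socle B := by
  rw [← ha b]; exact socle_mul ha hb

lemma socle_conj {a : B} (ha : a ∈ socle B) (h : B) : h * a * h⁻¹ ∈ socle B := by
  rw [socle_iff] at *
  intro c
  rw [mul_assoc, lmap_mul, lmap_mul, ha, ← lmap_mul, mul_inv_cancel, lmap_id]

lemma lmap_socle {a : B} (ha : a ∈ socle B) (h : B) : lmap h a = h * a * h⁻¹ := by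
  have h2 : (h * a * h⁻¹) * h = (h * a * h⁻¹) + h := socle_conj ha h h
  have key : h * a = h * a * h⁻¹ + h := by rw [← h2]; group
  unfold lmap
  conv_lhs => rw [key]
  abel


lemma socle_inv_eq_neg {a : B} (ha : a ∈ socle B) : a⁻¹ = -a := by
  have h1 : a⁻¹ * a = a⁻¹ + a := socle_inv ha a
  have h2 : a⁻¹ * a = 1 := inv_mul_cancel a
  rw [h1, lb_one_eq_zero] at h2
  exact eq_neg_of_add_eq_zero_left h2

/-- The socle as an additive subgroup. -/
def socAdd (B : Type*) [LeftBrace B] : AddSubgroup B where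
  carrier := socle B
  zero_mem' := socle_zero
  add_mem' := socle_add
  neg_mem' := socle_neg

lemma coset_iff (x y : B) : x⁻¹ * y ∈ socle B ↔ -x + y ∈ socle B := by
  constructor
  · intro hs
    have hy : y = x + x * (x⁻¹ * y) * x⁻¹ := by
      have := mul_eq_add_lmap x (x⁻¹ * y)
      rw [lmap_socle hs x] at this
      rw [← this]; group
    rw [hy]
    have : -x + (x + x * (x⁻¹ * y) * x⁻¹) = x * (x⁻¹ * y) * x⁻¹ := by abel
    rw [this]
    exact socle_conj hs x
  · intro ht
    have ht' : x⁻¹ * (-x + y) * x ∈ socle B := by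
      have := socle_conj ht x⁻¹
      rwa [inv_inv] at this
    have hx : x * (x⁻¹ * (-x + y) * x) = y := by
      have h1 := mul_eq_add_lmap x (x⁻¹ * (-x + y) * x)
      rw [lmap_socle ht' x] at h1
      have h2 : x * (x⁻¹ * (-x + y) * x) * x⁻¹ = -x + y := by group
      rw [h2] at h1
      rw [h1]; abel
    have h3 : x⁻¹ * y = x⁻¹ * (x * (x⁻¹ * (-x + y) * x)) := by rw [hx]
    have h4 : x⁻¹ * (x * (x⁻¹ * (-x + y) * x)) = x⁻¹ * (-x + y) * x := by group
    rw [h3, h4]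
    exact ht'

def eStar (a : B) (b : B) : ℕ → B
  | 0 => b
  | k + 1 => bstar a (eStar a b k)

/-- The additive subgroup generated by all `a*c` with `a ∈ A`, `c ∈ C`. -/
def starSub (A C : AddSubgroup B) : AddSubgroup B :=
  AddSubgroup.closure {x : B | ∃ a ∈ A, ∃ c ∈ C, x = bstar a c}

/-- Rump's left chain: `leftPow B n = B^{n+1}`, i.e. `B^1 = B`, `B^{n+1} = B * B^n`. -/
def leftPow (B : Type*) [LeftBrace B] : ℕ → AddSubgroup B
  | 0 => ⊤
  | n + 1 => starSub ⊤ (leftPow B n)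

/-- Rump's right chain: `rightPow B n = B^{(n+1)}`, i.e. `B^{(1)} = B`, `B^{(n+1)} = B^{(n)} * B`. -/
def rightPow (B : Type*) [LeftBrace B] : ℕ → AddSubgroup B
  | 0 => ⊤
  | n + 1 => starSub (rightPow B n) ⊤

/-- The commutator `[g,h] = g⁻¹h⁻¹gh`. -/
def pcomm {G : Type*} [Group G] (g h : G) : G := g⁻¹ * h⁻¹ * g * h

/-- Iterated commutator `engel g h n = [[…[[g,h],h]…],h]` with `h` occurring `n` times. -/
def engel {G : Type*} [Group G] (g h : G) : ℕ → G
  | 0 => g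
  | k + 1 => pcomm (engel g h k) h

/-- A group is Engel if every iterated commutator eventually vanishes. -/
def IsEngelGroup (G : Type*) [Group G] : Prop :=
  ∀ g h : G, ∃ n : ℕ, 0 < n ∧ engel g h n = 1

def r12 {X : Type*} (r : X × X → X × X) : X × X × X → X × X × X :=
  fun p => ((r (p.1, p.2.1)).1, (r (p.1, p.2.1)).2, p.2.2)

def r23 {X : Type*} (r : X × X → X × X) : X × X × X → X × X × X :=
  fun p => (p.1, r p.2)

/-- A non-degenerate involutive set-theoretic solution of the Yang–Baxter equation. -/
structure YBSolution (X : Type u) where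
  r : X × X → X × X
  ybe : r12 r ∘ r23 r ∘ r12 r = r23 r ∘ r12 r ∘ r23 r
  nondegL : ∀ x : X, Function.Bijective fun y => (r (x, y)).1
  nondegR : ∀ y : X, Function.Bijective fun x => (r (x, y)).2
  involutive : ∀ p : X × X, r (r p) = p

/-- `G`, with its left brace structure and the map `ι : X → G`, is the structure group
`G(X,r)` with its canonical left brace structure: `ι` is injective, `(G,+)` is free
abelian with basis `ι(X)`, `ˣy = L_x(y)` holds, the defining relations hold, and `G`
has the universal property of the group presented by these relations. -/
structure IsCanonicalBrace {X : Type u} (sol : YBSolution X) (G : Type u) [LeftBrace G]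
    (ι : X → G) : Prop where
  inj : Function.Injective ι
  basis : ∃ b : Module.Basis X ℤ G, ∀ x : X, b x = ι x
  act : ∀ x y : X, lmap (ι x) (ι y) = ι (sol.r (x, y)).1
  rel : ∀ x y : X, ι x * ι y = ι (sol.r (x, y)).1 * ι (sol.r (x, y)).2
  univ : ∀ {H : Type u} [Group H] (f : X → H),
    (∀ x y : X, f x * f y = f (sol.r (x, y)).1 * f (sol.r (x, y)).2) →
    ∃! φ : G →* H, ∀ x : X, φ (ι x) = f x

theorem stmt15 {X : Type u} [Finite X] (sol : YBSolution X)
    {G : Type u} [LeftBrace G] (ι : X → G) (hG : IsCanonicalBrace sol G ι)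
    (H : Subgroup G) (hH : (H : Set G) = socle G) (hfi : H.FiniteIndex) :
    (∃ A : AddSubgroup G, (A : Set G) = {x : G | ∃ g : G, x = H.index • g}) ∧
    (∃ N : Subgroup G, (N : Set G) = {x : G | ∃ g : G, x = H.index • g} ∧ N.Normal) ∧
    (∀ h x : G, (∃ g : G, x = H.index • g) → ∃ g : G, lmap h x = H.index • g) ∧
    {x : G | ∃ g : G, x = H.index • g} ⊆ socle G := by
  classical
  have hsub : {x : G | ∃ g : G, x = H.index • g} ⊆ socle G := by
    have e : (G ⧸ H) ≃ (G ⧸ socAdd G) :=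
      Quotient.congrRight (fun a b => by
        rw [QuotientGroup.leftRel_apply, QuotientAddGroup.leftRel_apply]
        have : a⁻¹ * b ∈ H ↔ a⁻¹ * b ∈ socle G := by
          rw [← hH]; rfl
        rw [this]
        exact coset_iff a b)
    have hidx : H.index = (socAdd G).index := by
      unfold Subgroup.index AddSubgroup.index
      exact Nat.card_congr e
    rintro x ⟨g, rfl⟩
    rw [hidx]
    exact (socAdd G).nsmul_index_mem g
  have hL : ∀ h x : G, (∃ g : G, x = H.index • g) → ∃ g : G, lmap h x = H.index • g := by
    rintro h x ⟨g, rfl⟩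
    exact ⟨lmap h g, map_nsmul (lhom h) H.index g⟩
  let A : AddSubgroup G :=
      { carrier := {x : G | ∃ g : G, x = H.index • g},
        zero_mem' := ⟨0, by rw [smul_zero]⟩,
        add_mem' := by
          rintro a b ⟨g, rfl⟩ ⟨g', rfl⟩
          exact ⟨g + g', by rw [smul_add]⟩,
        neg_mem' := by
          rintro a ⟨g, rfl⟩
          exact ⟨-g, by rw [smul_neg]⟩ }
  let N : Subgroup G :=
      { carrier := {x : G | ∃ g : G, x = H.index • g},
        one_mem' := ⟨0, by rw [smul_zero, lb_one_eq_zero]⟩,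
        mul_mem' := by
          rintro a b ha hb
          obtain ⟨g, rfl⟩ := ha
          obtain ⟨g', hg'⟩ := hL (H.index • g) b hb
          exact ⟨g + g', by rw [mul_eq_add_lmap, hg', smul_add]⟩,
        inv_mem' := by
          rintro a ha
          obtain ⟨g, rfl⟩ := ha
          exact ⟨-g, by rw [socle_inv_eq_neg (hsub ⟨g, rfl⟩), smul_neg]⟩ }
  refine ⟨⟨A, rfl⟩, ⟨N, rfl, ?_⟩, hL, hsub⟩
  · constructor
    rintro a ha h
    obtain ⟨g', hg'⟩ := hL h a ha
    have hconj : h * a * h⁻¹ = lmap h a := (lmap_socle (hsub ha) h).symm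
    exact ⟨g', by rw [hconj, hg']⟩
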